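/- Let g : ℝ → Sym_+(m) be defined by g(t) = a(t)^T a(t) where a(t) is a horizontal geodesic in M_+(n,m), i.e., a solves a'' = a' a^+ a' + (1/2) tr(a'(a^Ta)^{-1}(a')^T) a − tr(a' a^+) a' with a' a^+ symmetric. Then g satisfies the Ebin geodesic equation g'' = g' g^{-1} g' + (1/4) tr(g^{-1} g' g^{-1} g') g − (1/2) tr(g^{-1} g') g'. -/

import Mathlib

open Matrix

attribute [local instance] Matrix.frobeniusNormedAddCommGroup Matrix.frobeniusNormedSpace

noncomputable section

/-- Moore-Penrose pseudoinverse of a full-rank `n × m` matrix. -/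
def aplus {n m : ℕ} (a : Matrix (Fin n) (Fin m) ℝ) : Matrix (Fin m) (Fin n) ℝ :=
  (aᵀ * a)⁻¹ * aᵀ

/-- Matrix multiplication as a continuous bilinear map. -/
def mulCLM (n m k : ℕ) :
    Matrix (Fin n) (Fin m) ℝ →L[ℝ] Matrix (Fin m) (Fin k) ℝ →L[ℝ] Matrix (Fin n) (Fin k) ℝ :=
  LinearMap.toContinuousLinearMap
    { toFun := fun x => LinearMap.toContinuousLinearMap
        { toFun := fun y => x * y
          map_add' := fun y z => Matrix.mul_add x y z
          map_smul' := fun c y => (Matrix.mul_smul x c y) }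
      map_add' := fun x z => by
        ext y : 1
        simp [Matrix.add_mul]
      map_smul' := fun c x => by
        ext y : 1
        simp [Matrix.smul_mul] }

@[simp] lemma mulCLM_apply {n m k : ℕ} (x : Matrix (Fin n) (Fin m) ℝ)
    (y : Matrix (Fin m) (Fin k) ℝ) : mulCLM n m k x y = x * y := rfl

/-- Product rule for matrix-valued functions. -/
theorem HasDerivAt.matmul {n m k : ℕ} {u : ℝ → Matrix (Fin n) (Fin m) ℝ}
    {v : ℝ → Matrix (Fin m) (Fin k) ℝ} {u' : Matrix (Fin n) (Fin m) ℝ}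
    {v' : Matrix (Fin m) (Fin k) ℝ} {t : ℝ}
    (hu : HasDerivAt u u' t) (hv : HasDerivAt v v' t) :
    HasDerivAt (fun s => u s * v s) (u' * v t + u t * v') t := by
  letI : NormedAddCommGroup (Matrix (Fin m) (Fin k) ℝ →L[ℝ] Matrix (Fin n) (Fin k) ℝ) :=
    by exact ContinuousLinearMap.toNormedAddCommGroup
  letI : NormedSpace ℝ (Matrix (Fin m) (Fin k) ℝ →L[ℝ] Matrix (Fin n) (Fin k) ℝ) :=
    by exact ContinuousLinearMap.toNormedSpace
  have h1 : HasDerivAt (fun s => mulCLM n m k (u s)) (mulCLM n m k u') t :=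
    ((mulCLM n m k).hasFDerivAt.comp_hasDerivAt t hu)
  exact h1.clm_apply hv

/-- Transposition as a continuous linear map. -/
def transposeCLM (n m : ℕ) :
    Matrix (Fin n) (Fin m) ℝ →L[ℝ] Matrix (Fin m) (Fin n) ℝ :=
  LinearMap.toContinuousLinearMap
    { toFun := fun x => xᵀ
      map_add' := fun x y => Matrix.transpose_add x y
      map_smul' := fun c x => Matrix.transpose_smul c x }

theorem HasDerivAt.mtranspose {n m : ℕ} {u : ℝ → Matrix (Fin n) (Fin m) ℝ}
    {u' : Matrix (Fin n) (Fin m) ℝ} {t : ℝ} (hu : HasDerivAt u u' t) :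
    HasDerivAt (fun s => (u s)ᵀ) (u'ᵀ) t :=
  (transposeCLM n m).hasFDerivAt.comp_hasDerivAt t hu

lemma isUnit_det_ata {n m : ℕ} (A : Matrix (Fin n) (Fin m) ℝ) (h : A.rank = m) :
    IsUnit (Aᵀ * A).det := by
  rw [← Matrix.isUnit_iff_isUnit_det, ← Matrix.mulVec_surjective_iff_isUnit]
  have hr : (Aᵀ * A).rank = m := by rw [Matrix.rank_transpose_mul_self, h]
  have htop : LinearMap.range (Aᵀ * A).mulVecLin = ⊤ := by
    apply Submodule.eq_top_of_finrank_eq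
    rw [← Matrix.rank, hr]
    simp [Module.finrank_pi]
  intro y
  obtain ⟨x, hx⟩ := LinearMap.range_eq_top.mp htop y
  exact ⟨x, by rw [← Matrix.mulVecLin_apply]; exact hx⟩

/-- The key pointwise matrix identity. -/
lemma key {n m : ℕ} (A A' : Matrix (Fin n) (Fin m) ℝ)
    (hU : IsUnit (Aᵀ * A).det)
    (hhor : (A' * ((Aᵀ * A)⁻¹ * Aᵀ))ᵀ = A' * ((Aᵀ * A)⁻¹ * Aᵀ)) :
    ((A' * ((Aᵀ * A)⁻¹ * Aᵀ) * A'
        + ((1 / 2) * Matrix.trace (A' * (Aᵀ * A)⁻¹ * A'ᵀ)) • A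
        - (Matrix.trace (A' * ((Aᵀ * A)⁻¹ * Aᵀ))) • A')ᵀ * A + A'ᵀ * A')
      + (A'ᵀ * A' + Aᵀ * (A' * ((Aᵀ * A)⁻¹ * Aᵀ) * A'
        + ((1 / 2) * Matrix.trace (A' * (Aᵀ * A)⁻¹ * A'ᵀ)) • A
        - (Matrix.trace (A' * ((Aᵀ * A)⁻¹ * Aᵀ))) • A'))
    = (A'ᵀ * A + Aᵀ * A') * (Aᵀ * A)⁻¹ * (A'ᵀ * A + Aᵀ * A')
      + ((1 / 4) * Matrix.trace ((Aᵀ * A)⁻¹ * (A'ᵀ * A + Aᵀ * A') * (Aᵀ * A)⁻¹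
          * (A'ᵀ * A + Aᵀ * A'))) • (Aᵀ * A)
      - ((1 / 2) * Matrix.trace ((Aᵀ * A)⁻¹ * (A'ᵀ * A + Aᵀ * A'))) • (A'ᵀ * A + Aᵀ * A') := by
  set Gi := (Aᵀ * A)⁻¹ with hGi
  have f1 : Gi * (Aᵀ * A) = 1 := nonsing_inv_mul _ hU
  have f2 : (Aᵀ * A) * Gi = 1 := mul_nonsing_inv _ hU
  have f3 : Giᵀ = Gi := by
    rw [hGi, transpose_nonsing_inv, transpose_mul, transpose_transpose]
  have hh : A * (Gi * A'ᵀ) = A' * (Gi * Aᵀ) := by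
    have h := hhor
    rw [transpose_mul, transpose_mul, transpose_transpose, f3] at h
    rw [← Matrix.mul_assoc]
    exact h
  have f4 : A' = A * (Gi * (A'ᵀ * A)) := by
    have h := congrArg (· * A) hh
    simp only [Matrix.mul_assoc] at h
    rw [f1, Matrix.mul_one] at h
    exact h.symm
  have f5 : A'ᵀ * A = Aᵀ * A' := by
    conv_rhs => rw [f4]
    rw [← Matrix.mul_assoc, ← Matrix.mul_assoc, f2, Matrix.one_mul]
  rw [f5]
  set B := Aᵀ * A' with hB
  have f6 : Bᵀ = B := by rw [hB, transpose_mul, transpose_transpose, f5]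
  have f4' : A' = A * (Gi * B) := by rw [f4, f5]
  have f7 : A'ᵀ = B * (Gi * Aᵀ) := by
    conv_lhs => rw [f4']
    rw [transpose_mul, transpose_mul, f3, f6, Matrix.mul_assoc]
  have c1m : ∀ X : Matrix (Fin m) (Fin m) ℝ, Aᵀ * (A * (Gi * X)) = X := by
    intro X
    rw [← Matrix.mul_assoc, ← Matrix.mul_assoc, f2, Matrix.one_mul]
  have c1n : ∀ X : Matrix (Fin m) (Fin n) ℝ, Aᵀ * (A * (Gi * X)) = X := by
    intro X
    rw [← Matrix.mul_assoc, ← Matrix.mul_assoc, f2, Matrix.one_mul]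
  have T4 : Matrix.trace (A' * Gi * A'ᵀ) = Matrix.trace (Gi * (B * (Gi * B))) := by
    rw [f7]
    conv_lhs => rw [f4']
    simp only [Matrix.mul_assoc]
    rw [Matrix.trace_mul_comm]
    simp only [Matrix.mul_assoc, f1, Matrix.mul_one]
  have T5 : Matrix.trace (A' * (Gi * Aᵀ)) = Matrix.trace (Gi * B) := by
    rw [Matrix.trace_mul_comm, Matrix.mul_assoc, ← hB]
  rw [T4, T5]
  simp only [transpose_add, transpose_sub, transpose_smul, transpose_mul,
    transpose_transpose, f3, f6]
  rw [f7]
  conv_lhs => rw [f4']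
  simp only [Matrix.add_mul, Matrix.mul_add, Matrix.sub_mul, Matrix.mul_sub,
    Matrix.smul_mul, Matrix.mul_smul, Matrix.mul_assoc, Matrix.trace_add,
    smul_smul]
  simp only [f1, c1m, c1n, Matrix.mul_one]
  match_scalars <;> ring

/-- if `a` is a horizontal geodesic in `M₊(n,m)`, then
`g = aᵀa` solves the Ebin geodesic equation
`g'' = g' g⁻¹ g' + (1/4) tr(g⁻¹ g' g⁻¹ g') g − (1/2) tr(g⁻¹ g') g'`. -/
theorem stmt_18 {n m : ℕ} (hmn : m ≤ n)
    (a a' : ℝ → Matrix (Fin n) (Fin m) ℝ)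
    (hrank : ∀ t, (a t).rank = m)
    (hda : ∀ t, HasDerivAt a (a' t) t)
    (hhor : ∀ t, (a' t * aplus (a t))ᵀ = a' t * aplus (a t))
    (hgeo : ∀ t, HasDerivAt a'
      (a' t * aplus (a t) * a' t
        + ((1 / 2) * Matrix.trace (a' t * ((a t)ᵀ * a t)⁻¹ * (a' t)ᵀ)) • a t
        - (Matrix.trace (a' t * aplus (a t))) • a' t) t)
    (g g' : ℝ → Matrix (Fin m) (Fin m) ℝ)
    (hg : ∀ t, g t = (a t)ᵀ * a t)
    (hg' : ∀ t, g' t = (a' t)ᵀ * a t + (a t)ᵀ * a' t) :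
    (∀ t, HasDerivAt g (g' t) t) ∧
    (∀ t, HasDerivAt g'
      (g' t * (g t)⁻¹ * g' t
        + ((1 / 4) * Matrix.trace ((g t)⁻¹ * g' t * (g t)⁻¹ * g' t)) • g t
        - ((1 / 2) * Matrix.trace ((g t)⁻¹ * g' t)) • g' t) t) := by
  obtain rfl : g = fun s => (a s)ᵀ * a s := funext hg
  obtain rfl : g' = fun s => (a' s)ᵀ * a s + (a s)ᵀ * a' s := funext hg'
  constructor
  · intro t
    exact (hda t).mtranspose.matmul (hda t)
  · intro t
    have hU := isUnit_det_ata (a t) (hrank t)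
    have hh := hhor t
    simp only [aplus] at hh
    have h1 := ((hgeo t).mtranspose).matmul (hda t)
    have h2 := ((hda t).mtranspose).matmul (hgeo t)
    have h := h1.add h2
    simp only [aplus] at h
    have e := key (a t) (a' t) hU hh
    beta_reduce
    rw [← e]
    exact h
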